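/- Let 0 = x_0 < x_1 < ⋯ < x_N = 1 be a partition of [0,1], let ε > 0, let a ∈ C¹([0,1]) with a(x) ≥ β > 0, let b be continuous with b(x) − a′(x)/2 ≥ γ > 0 on [0,1], let ρ(x_i) ≥ 0 for 0 ≤ i ≤ N, and let f be integrable on [0,1]. Then there exists a unique u_N ∈ V_N^k such that B(u_N, v) = ∫_0^1 f v dx for all v ∈ V_N^k. -/

import Mathlib

open Set Finset

/-- The jump `[w(x_i)]` of a broken function at node `x_i`, where `w i` is the
(smooth) representative of the broken function on the element `I_i = [x_{i−1}, x_i]`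
(elements indexed `1, …, N`).  Conventions: `[w(x_0)] = −w(x_0^+)`, `[w(x_N)] = w(x_N^−)`,
and `[w(x_i)] = w(x_i^−) − w(x_i^+)` for interior nodes. -/
noncomputable def brokenJump (N : ℕ) (x : ℕ → ℝ) (w : ℕ → ℝ → ℝ) (i : ℕ) : ℝ :=
  if i = 0 then -(w 1 (x 0))
  else if i = N then w N (x N)
  else w i (x i) - w (i + 1) (x i)

/-- The average `{w(x_i)}` of a broken function at node `x_i`.  Conventions:
`{w(x_0)} = w(x_0^+)`, `{w(x_N)} = w(x_N^−)`, and
`{w(x_i)} = (w(x_i^+) + w(x_i^−))/2` for interior nodes. -/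
noncomputable def brokenAvg (N : ℕ) (x : ℕ → ℝ) (w : ℕ → ℝ → ℝ) (i : ℕ) : ℝ :=
  if i = 0 then w 1 (x 0)
  else if i = N then w N (x N)
  else (w (i + 1) (x i) + w i (x i)) / 2

/-- The NIPG bilinear form `B(u, v)`; `u, v` are broken functions given by their
elementwise representatives `u i, v i` on `I_i = [x_{i−1}, x_i]` together with the
elementwise derivatives `u' i, v' i`. -/
noncomputable def nipgB (N : ℕ) (x : ℕ → ℝ) (ε : ℝ) (a b : ℝ → ℝ) (ρ : ℕ → ℝ)
    (u u' v v' : ℕ → ℝ → ℝ) : ℝ :=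
  (∑ i ∈ Finset.Icc 1 N, ∫ t in (x (i - 1))..(x i), ε * u' i t * v' i t)
  - ε * ∑ i ∈ Finset.Icc 0 N, brokenAvg N x u' i * brokenJump N x v i
  + ε * ∑ i ∈ Finset.Icc 0 N, brokenAvg N x v' i * brokenJump N x u i
  + ∑ i ∈ Finset.Icc 0 N, ρ i * brokenJump N x u i * brokenJump N x v i
  + (∑ i ∈ Finset.Icc 1 N, ∫ t in (x (i - 1))..(x i), a t * u' i t * v i t)
  - (∑ i ∈ Finset.Icc 0 (N - 1), a (x i) * brokenJump N x u i * v (i + 1) (x i))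
  + ∑ i ∈ Finset.Icc 1 N, ∫ t in (x (i - 1))..(x i), b t * u i t * v i t

namespace NIPG

open MeasureTheory intervalIntegral Polynomial

noncomputable def Bp (N : ℕ) (x : ℕ → ℝ) (ε : ℝ) (a b : ℝ → ℝ) (ρ : ℕ → ℝ)
    (u v : ℕ → Polynomial ℝ) : ℝ :=
  nipgB N x ε a b ρ (fun i t => (u i).eval t) (fun i t => ((u i).derivative).eval t)
    (fun i t => (v i).eval t) (fun i t => ((v i).derivative).eval t)

variable {N : ℕ} {x : ℕ → ℝ}

lemma x_le (hmono : ∀ i < N, x i < x (i + 1)) :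
    ∀ {i j : ℕ}, i ≤ j → j ≤ N → x i ≤ x j := by
  intro i j hij hjN
  induction j with
  | zero => interval_cases i; rfl
  | succ m ih =>
    rcases Nat.eq_or_lt_of_le hij with h | h
    · rw [h]
    · exact le_trans (ih (by omega) (by omega)) (le_of_lt (hmono m (by omega)))

lemma x_lt (hmono : ∀ i < N, x i < x (i + 1)) {i : ℕ} (h1 : 1 ≤ i) (h2 : i ≤ N) :
    x (i - 1) < x i := by
  have h := hmono (i - 1) (by omega)
  rwa [Nat.sub_add_cancel h1] at h

lemma x_mem (hx0 : x 0 = 0) (hxN : x N = 1) (hmono : ∀ i < N, x i < x (i + 1))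
    {i : ℕ} (h : i ≤ N) : x i ∈ Set.Icc (0:ℝ) 1 :=
  ⟨hx0 ▸ x_le hmono (Nat.zero_le i) h, hxN ▸ x_le hmono h le_rfl⟩

lemma elem_subset (hx0 : x 0 = 0) (hxN : x N = 1) (hmono : ∀ i < N, x i < x (i + 1))
    {i : ℕ} (h1 : 1 ≤ i) (h2 : i ≤ N) :
    Set.uIcc (x (i - 1)) (x i) ⊆ Set.Icc (0:ℝ) 1 := by
  rw [Set.uIcc_of_le (x_lt hmono h1 h2).le]
  intro t ht
  exact ⟨le_trans (x_mem hx0 hxN hmono (by omega : i - 1 ≤ N)).1 ht.1,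
    le_trans ht.2 (x_mem hx0 hxN hmono h2).2⟩

lemma II (hx0 : x 0 = 0) (hxN : x N = 1) (hmono : ∀ i < N, x i < x (i + 1))
    {i : ℕ} (h1 : 1 ≤ i) (h2 : i ≤ N) {g : ℝ → ℝ}
    (hg : ContinuousOn g (Set.Icc 0 1)) :
    IntervalIntegrable g volume (x (i - 1)) (x i) :=
  (hg.mono (elem_subset hx0 hxN hmono h1 h2)).intervalIntegrable

lemma brokenJump_add (w1 w2 : ℕ → ℝ → ℝ) (i : ℕ) :
    brokenJump N x (fun j t => w1 j t + w2 j t) i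
      = brokenJump N x w1 i + brokenJump N x w2 i := by
  unfold brokenJump; split_ifs <;> ring

lemma brokenJump_smul (c : ℝ) (w : ℕ → ℝ → ℝ) (i : ℕ) :
    brokenJump N x (fun j t => c * w j t) i = c * brokenJump N x w i := by
  unfold brokenJump; split_ifs <;> ring

lemma brokenAvg_add (w1 w2 : ℕ → ℝ → ℝ) (i : ℕ) :
    brokenAvg N x (fun j t => w1 j t + w2 j t) i
      = brokenAvg N x w1 i + brokenAvg N x w2 i := by
  unfold brokenAvg; split_ifs <;> ring

lemma brokenAvg_smul (c : ℝ) (w : ℕ → ℝ → ℝ) (i : ℕ) :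
    brokenAvg N x (fun j t => c * w j t) i = c * brokenAvg N x w i := by
  unfold brokenAvg; split_ifs <;> ring

lemma natDegree_le_of_mem {k : ℕ} {p : Polynomial ℝ} (hp : p ∈ Polynomial.degreeLT ℝ (k + 1)) :
    p.natDegree ≤ k := by
  by_cases h : p = 0
  · simp [h]
  · exact Nat.lt_succ_iff.mp ((Polynomial.natDegree_lt_iff_degree_lt h).2
      (Polynomial.mem_degreeLT.1 hp))

lemma mem_of_natDegree_le {k : ℕ} {p : Polynomial ℝ} (hp : p.natDegree ≤ k) :
    p ∈ Polynomial.degreeLT ℝ (k + 1) := by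
  rw [Polynomial.mem_degreeLT]
  calc p.degree ≤ (p.natDegree : WithBot ℕ) := Polynomial.degree_le_natDegree
    _ ≤ (k : WithBot ℕ) := by exact_mod_cast hp
    _ < ((k + 1 : ℕ) : WithBot ℕ) := by exact_mod_cast Nat.lt_succ_self k

lemma sq_int_nonneg (hmono : ∀ i < N, x i < x (i + 1)) {i : ℕ} (h1 : 1 ≤ i) (h2 : i ≤ N)
    (p : Polynomial ℝ) : 0 ≤ ∫ t in (x (i - 1))..(x i), (p.eval t) ^ 2 :=
  intervalIntegral.integral_nonneg (x_lt hmono h1 h2).le (fun _ _ => sq_nonneg _)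

lemma sq_int_pos (hmono : ∀ i < N, x i < x (i + 1)) {i : ℕ} (h1 : 1 ≤ i) (h2 : i ≤ N)
    {p : Polynomial ℝ} (hp : p ≠ 0) : 0 < ∫ t in (x (i - 1))..(x i), (p.eval t) ^ 2 := by
  have hlt := x_lt hmono h1 h2
  rw [intervalIntegral.integral_of_le hlt.le]
  rw [MeasureTheory.setIntegral_pos_iff_support_of_nonneg_ae
    (Filter.Eventually.of_forall fun t => sq_nonneg _)
    ((p.continuous.pow 2).integrableOn_Ioc)]
  have hroots : Set.Finite {t : ℝ | p.IsRoot t} := p.finite_setOf_isRoot hp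
  have h0 : volume {t : ℝ | p.IsRoot t} = 0 := hroots.measure_zero _
  have hsub : Set.Ioc (x (i - 1)) (x i) \ {t : ℝ | p.IsRoot t}
      ⊆ Function.support (fun t => (p.eval t) ^ 2) ∩ Set.Ioc (x (i - 1)) (x i) := by
    rintro t ⟨ht1, ht2⟩
    exact ⟨pow_ne_zero _ ht2, ht1⟩
  calc (0:ENNReal) < volume (Set.Ioc (x (i - 1)) (x i)) := by
        rw [Real.volume_Ioc]; exact ENNReal.ofReal_pos.2 (by linarith)
    _ = volume (Set.Ioc (x (i - 1)) (x i) \ {t : ℝ | p.IsRoot t}) :=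
        (measure_diff_null h0).symm
    _ ≤ _ := measure_mono hsub


lemma ibp {a a' : ℝ → ℝ} (hx0 : x 0 = 0) (hxN : x N = 1)
    (hmono : ∀ i < N, x i < x (i + 1))
    (ha : ∀ t ∈ Set.Icc (0:ℝ) 1, HasDerivWithinAt a (a' t) (Set.Icc 0 1) t)
    (ha' : ContinuousOn a' (Set.Icc 0 1))
    {i : ℕ} (h1 : 1 ≤ i) (h2 : i ≤ N) (p : Polynomial ℝ) :
    ∫ t in (x (i - 1))..(x i), a t * (p.derivative.eval t) * p.eval t
      = (a (x i) * (p.eval (x i)) ^ 2 - a (x (i - 1)) * (p.eval (x (i - 1))) ^ 2) / 2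
        - ∫ t in (x (i - 1))..(x i), a' t * (p.eval t) ^ 2 / 2 := by
  have hlt := x_lt hmono h1 h2
  have hsub : Set.Icc (x (i - 1)) (x i) ⊆ Set.Icc (0:ℝ) 1 := by
    have := elem_subset hx0 hxN hmono h1 h2
    rwa [Set.uIcc_of_le hlt.le] at this
  have hIoo : Set.Ioo (x (i - 1)) (x i) ⊆ Set.Ioo (0:ℝ) 1 := by
    intro t ht
    have h01 := x_mem hx0 hxN hmono (by omega : i - 1 ≤ N)
    have h02 := x_mem hx0 hxN hmono h2
    exact ⟨lt_of_le_of_lt h01.1 ht.1, lt_of_lt_of_le ht.2 h02.2⟩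
  have hcont_a : ContinuousOn a (Set.Icc (0:ℝ) 1) := fun t ht => (ha t ht).continuousWithinAt
  set g : ℝ → ℝ := fun t => a t * (p.eval t) ^ 2 / 2 with hg_def
  set G : ℝ → ℝ := fun t => a' t * (p.eval t) ^ 2 / 2 + a t * (p.derivative.eval t) * p.eval t
    with hG_def
  have hg_cont : ContinuousOn g (Set.Icc (x (i - 1)) (x i)) :=
    (((hcont_a.mono hsub).mul ((p.continuous.pow 2).continuousOn)).div_const 2)
  have hderiv : ∀ t ∈ Set.Ioo (x (i - 1)) (x i), HasDerivWithinAt g (G t) (Set.Ioi t) t := by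
    intro t ht
    have ht01 : t ∈ Set.Ioo (0:ℝ) 1 := hIoo ht
    have hA : HasDerivAt a (a' t) t :=
      (ha t (Set.Ioo_subset_Icc_self ht01)).hasDerivAt (Icc_mem_nhds ht01.1 ht01.2)
    have hp : HasDerivAt (fun t => p.eval t) (p.derivative.eval t) t := p.hasDerivAt t
    have hsq : HasDerivAt (fun t => (p.eval t) ^ 2)
        (2 * (p.eval t) ^ 1 * p.derivative.eval t) t := hp.pow 2
    have h := (hA.mul hsq).div_const 2
    have e : G t = (a' t * (p.eval t) ^ 2 + a t * (2 * (p.eval t) ^ 1 * p.derivative.eval t)) / 2 := by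
      simp only [hG_def]; ring
    rw [e]
    exact h.hasDerivWithinAt
  have hint : IntervalIntegrable G volume (x (i - 1)) (x i) := by
    apply II hx0 hxN hmono h1 h2
    exact ((ha'.mul ((p.continuous.pow 2).continuousOn)).div_const 2).add
      ((hcont_a.mul (p.derivative.continuous.continuousOn)).mul (p.continuous.continuousOn))
  have key := intervalIntegral.integral_eq_sub_of_hasDeriv_right_of_le hlt.le hg_cont hderiv hint
  have hint1 : IntervalIntegrable (fun t => a' t * (p.eval t) ^ 2 / 2) volume (x (i - 1)) (x i) :=
    II hx0 hxN hmono h1 h2 ((ha'.mul ((p.continuous.pow 2).continuousOn)).div_const 2)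
  have hint2 : IntervalIntegrable (fun t => a t * (p.derivative.eval t) * p.eval t) volume
      (x (i - 1)) (x i) :=
    II hx0 hxN hmono h1 h2
      ((hcont_a.mul (p.derivative.continuous.continuousOn)).mul (p.continuous.continuousOn))
  rw [hG_def] at key
  rw [intervalIntegral.integral_add hint1 hint2] at key
  have : g (x i) - g (x (i - 1))
      = (a (x i) * (p.eval (x i)) ^ 2 - a (x (i - 1)) * (p.eval (x (i - 1))) ^ 2) / 2 := by
    simp only [hg_def]; ring
  linarith [key, this]


variable {ε : ℝ} {a b : ℝ → ℝ} {ρ : ℕ → ℝ}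

lemma Bp_add_left (hx0 : x 0 = 0) (hxN : x N = 1) (hmono : ∀ i < N, x i < x (i + 1))
    (hacont : ContinuousOn a (Set.Icc 0 1)) (hbcont : ContinuousOn b (Set.Icc 0 1))
    (u1 u2 v : ℕ → Polynomial ℝ) :
    Bp N x ε a b ρ (fun i => u1 i + u2 i) v = Bp N x ε a b ρ u1 v + Bp N x ε a b ρ u2 v := by
  unfold Bp nipgB
  simp only [Polynomial.derivative_add, Polynomial.eval_add, brokenJump_add, brokenAvg_add,
    mul_add, add_mul, Finset.sum_add_distrib]
  have e1 : (∑ i ∈ Finset.Icc 1 N, ∫ t in (x (i - 1))..(x i),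
        (ε * (u1 i).derivative.eval t * (v i).derivative.eval t
          + ε * (u2 i).derivative.eval t * (v i).derivative.eval t))
      = (∑ i ∈ Finset.Icc 1 N, ∫ t in (x (i - 1))..(x i),
          ε * (u1 i).derivative.eval t * (v i).derivative.eval t)
        + ∑ i ∈ Finset.Icc 1 N, ∫ t in (x (i - 1))..(x i),
          ε * (u2 i).derivative.eval t * (v i).derivative.eval t := by
    rw [← Finset.sum_add_distrib]
    refine Finset.sum_congr rfl fun i hi => ?_
    exact intervalIntegral.integral_add
      (((continuous_const.mul (u1 i).derivative.continuous).mul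
        (v i).derivative.continuous).intervalIntegrable _ _)
      (((continuous_const.mul (u2 i).derivative.continuous).mul
        (v i).derivative.continuous).intervalIntegrable _ _)
  have e2 : (∑ i ∈ Finset.Icc 1 N, ∫ t in (x (i - 1))..(x i),
        (a t * (u1 i).derivative.eval t * (v i).eval t
          + a t * (u2 i).derivative.eval t * (v i).eval t))
      = (∑ i ∈ Finset.Icc 1 N, ∫ t in (x (i - 1))..(x i),
          a t * (u1 i).derivative.eval t * (v i).eval t)
        + ∑ i ∈ Finset.Icc 1 N, ∫ t in (x (i - 1))..(x i),
          a t * (u2 i).derivative.eval t * (v i).eval t := by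
    rw [← Finset.sum_add_distrib]
    refine Finset.sum_congr rfl fun i hi => ?_
    obtain ⟨h1, h2⟩ := Finset.mem_Icc.1 hi
    exact intervalIntegral.integral_add
      (II hx0 hxN hmono h1 h2 ((hacont.mul
        (u1 i).derivative.continuous.continuousOn).mul (v i).continuous.continuousOn))
      (II hx0 hxN hmono h1 h2 ((hacont.mul
        (u2 i).derivative.continuous.continuousOn).mul (v i).continuous.continuousOn))
  have e3 : (∑ i ∈ Finset.Icc 1 N, ∫ t in (x (i - 1))..(x i),
        (b t * (u1 i).eval t * (v i).eval t + b t * (u2 i).eval t * (v i).eval t))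
      = (∑ i ∈ Finset.Icc 1 N, ∫ t in (x (i - 1))..(x i),
          b t * (u1 i).eval t * (v i).eval t)
        + ∑ i ∈ Finset.Icc 1 N, ∫ t in (x (i - 1))..(x i),
          b t * (u2 i).eval t * (v i).eval t := by
    rw [← Finset.sum_add_distrib]
    refine Finset.sum_congr rfl fun i hi => ?_
    obtain ⟨h1, h2⟩ := Finset.mem_Icc.1 hi
    exact intervalIntegral.integral_add
      (II hx0 hxN hmono h1 h2 ((hbcont.mul
        (u1 i).continuous.continuousOn).mul (v i).continuous.continuousOn))
      (II hx0 hxN hmono h1 h2 ((hbcont.mul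
        (u2 i).continuous.continuousOn).mul (v i).continuous.continuousOn))
  rw [e1, e2, e3]
  ring


lemma Bp_smul_left (c : ℝ) (u v : ℕ → Polynomial ℝ) :
    Bp N x ε a b ρ (fun i => c • u i) v = c * Bp N x ε a b ρ u v := by
  unfold Bp nipgB
  simp only [Polynomial.derivative_smul, Polynomial.eval_smul, smul_eq_mul,
    brokenJump_smul, brokenAvg_smul]
  have g1 : (∑ i ∈ Finset.Icc 1 N, ∫ t in (x (i - 1))..(x i),
        ε * (c * (u i).derivative.eval t) * (v i).derivative.eval t)
      = c * ∑ i ∈ Finset.Icc 1 N, ∫ t in (x (i - 1))..(x i),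
          ε * (u i).derivative.eval t * (v i).derivative.eval t := by
    rw [Finset.mul_sum]
    refine Finset.sum_congr rfl fun i _ => ?_
    rw [← intervalIntegral.integral_const_mul]
    exact intervalIntegral.integral_congr fun t _ => by ring
  have g2 : (∑ i ∈ Finset.Icc 0 N,
        brokenAvg N x (fun j t => (v j).derivative.eval t) i
          * (c * brokenJump N x (fun j t => (u j).eval t) i))
      = c * ∑ i ∈ Finset.Icc 0 N,
          brokenAvg N x (fun j t => (v j).derivative.eval t) i
            * brokenJump N x (fun j t => (u j).eval t) i := by
    rw [Finset.mul_sum]; exact Finset.sum_congr rfl fun i _ => by ring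
  have g2b : (∑ i ∈ Finset.Icc 0 N,
        c * brokenAvg N x (fun j t => (u j).derivative.eval t) i
          * brokenJump N x (fun j t => (v j).eval t) i)
      = c * ∑ i ∈ Finset.Icc 0 N,
          brokenAvg N x (fun j t => (u j).derivative.eval t) i
            * brokenJump N x (fun j t => (v j).eval t) i := by
    rw [Finset.mul_sum]; exact Finset.sum_congr rfl fun i _ => by ring
  have g3 : (∑ i ∈ Finset.Icc 0 N,
        ρ i * (c * brokenJump N x (fun j t => (u j).eval t) i)
          * brokenJump N x (fun j t => (v j).eval t) i)
      = c * ∑ i ∈ Finset.Icc 0 N,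
          ρ i * brokenJump N x (fun j t => (u j).eval t) i
            * brokenJump N x (fun j t => (v j).eval t) i := by
    rw [Finset.mul_sum]; exact Finset.sum_congr rfl fun i _ => by ring
  have g4 : (∑ i ∈ Finset.Icc 1 N, ∫ t in (x (i - 1))..(x i),
        a t * (c * (u i).derivative.eval t) * (v i).eval t)
      = c * ∑ i ∈ Finset.Icc 1 N, ∫ t in (x (i - 1))..(x i),
          a t * (u i).derivative.eval t * (v i).eval t := by
    rw [Finset.mul_sum]
    refine Finset.sum_congr rfl fun i _ => ?_
    rw [← intervalIntegral.integral_const_mul]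
    exact intervalIntegral.integral_congr fun t _ => by ring
  have g5 : (∑ i ∈ Finset.Icc 0 (N - 1),
        a (x i) * (c * brokenJump N x (fun j t => (u j).eval t) i) * (v (i + 1)).eval (x i))
      = c * ∑ i ∈ Finset.Icc 0 (N - 1),
          a (x i) * brokenJump N x (fun j t => (u j).eval t) i * (v (i + 1)).eval (x i) := by
    rw [Finset.mul_sum]; exact Finset.sum_congr rfl fun i _ => by ring
  have g6 : (∑ i ∈ Finset.Icc 1 N, ∫ t in (x (i - 1))..(x i),
        b t * (c * (u i).eval t) * (v i).eval t)
      = c * ∑ i ∈ Finset.Icc 1 N, ∫ t in (x (i - 1))..(x i),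
          b t * (u i).eval t * (v i).eval t := by
    rw [Finset.mul_sum]
    refine Finset.sum_congr rfl fun i _ => ?_
    rw [← intervalIntegral.integral_const_mul]
    exact intervalIntegral.integral_congr fun t _ => by ring
  rw [g1, g2, g2b, g3, g4, g5, g6]
  ring

lemma Bp_add_right (hx0 : x 0 = 0) (hxN : x N = 1) (hmono : ∀ i < N, x i < x (i + 1))
    (hacont : ContinuousOn a (Set.Icc 0 1)) (hbcont : ContinuousOn b (Set.Icc 0 1))
    (u v1 v2 : ℕ → Polynomial ℝ) :
    Bp N x ε a b ρ u (fun i => v1 i + v2 i) = Bp N x ε a b ρ u v1 + Bp N x ε a b ρ u v2 := by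
  unfold Bp nipgB
  simp only [Polynomial.derivative_add, Polynomial.eval_add, brokenJump_add, brokenAvg_add,
    mul_add, add_mul, Finset.sum_add_distrib]
  have e1 : (∑ i ∈ Finset.Icc 1 N, ∫ t in (x (i - 1))..(x i),
        (ε * (u i).derivative.eval t * (v1 i).derivative.eval t
          + ε * (u i).derivative.eval t * (v2 i).derivative.eval t))
      = (∑ i ∈ Finset.Icc 1 N, ∫ t in (x (i - 1))..(x i),
          ε * (u i).derivative.eval t * (v1 i).derivative.eval t)
        + ∑ i ∈ Finset.Icc 1 N, ∫ t in (x (i - 1))..(x i),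
          ε * (u i).derivative.eval t * (v2 i).derivative.eval t := by
    rw [← Finset.sum_add_distrib]
    refine Finset.sum_congr rfl fun i hi => ?_
    exact intervalIntegral.integral_add
      (((continuous_const.mul (u i).derivative.continuous).mul
        (v1 i).derivative.continuous).intervalIntegrable _ _)
      (((continuous_const.mul (u i).derivative.continuous).mul
        (v2 i).derivative.continuous).intervalIntegrable _ _)
  have e2 : (∑ i ∈ Finset.Icc 1 N, ∫ t in (x (i - 1))..(x i),
        (a t * (u i).derivative.eval t * (v1 i).eval t
          + a t * (u i).derivative.eval t * (v2 i).eval t))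
      = (∑ i ∈ Finset.Icc 1 N, ∫ t in (x (i - 1))..(x i),
          a t * (u i).derivative.eval t * (v1 i).eval t)
        + ∑ i ∈ Finset.Icc 1 N, ∫ t in (x (i - 1))..(x i),
          a t * (u i).derivative.eval t * (v2 i).eval t := by
    rw [← Finset.sum_add_distrib]
    refine Finset.sum_congr rfl fun i hi => ?_
    obtain ⟨h1, h2⟩ := Finset.mem_Icc.1 hi
    exact intervalIntegral.integral_add
      (II hx0 hxN hmono h1 h2 ((hacont.mul
        (u i).derivative.continuous.continuousOn).mul (v1 i).continuous.continuousOn))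
      (II hx0 hxN hmono h1 h2 ((hacont.mul
        (u i).derivative.continuous.continuousOn).mul (v2 i).continuous.continuousOn))
  have e3 : (∑ i ∈ Finset.Icc 1 N, ∫ t in (x (i - 1))..(x i),
        (b t * (u i).eval t * (v1 i).eval t + b t * (u i).eval t * (v2 i).eval t))
      = (∑ i ∈ Finset.Icc 1 N, ∫ t in (x (i - 1))..(x i),
          b t * (u i).eval t * (v1 i).eval t)
        + ∑ i ∈ Finset.Icc 1 N, ∫ t in (x (i - 1))..(x i),
          b t * (u i).eval t * (v2 i).eval t := by
    rw [← Finset.sum_add_distrib]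
    refine Finset.sum_congr rfl fun i hi => ?_
    obtain ⟨h1, h2⟩ := Finset.mem_Icc.1 hi
    exact intervalIntegral.integral_add
      (II hx0 hxN hmono h1 h2 ((hbcont.mul
        (u i).continuous.continuousOn).mul (v1 i).continuous.continuousOn))
      (II hx0 hxN hmono h1 h2 ((hbcont.mul
        (u i).continuous.continuousOn).mul (v2 i).continuous.continuousOn))
  rw [e1, e2, e3]
  ring

lemma Bp_smul_right (c : ℝ) (u v : ℕ → Polynomial ℝ) :
    Bp N x ε a b ρ u (fun i => c • v i) = c * Bp N x ε a b ρ u v := by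
  unfold Bp nipgB
  simp only [Polynomial.derivative_smul, Polynomial.eval_smul, smul_eq_mul,
    brokenJump_smul, brokenAvg_smul]
  have g1 : (∑ i ∈ Finset.Icc 1 N, ∫ t in (x (i - 1))..(x i),
        ε * (u i).derivative.eval t * (c * (v i).derivative.eval t))
      = c * ∑ i ∈ Finset.Icc 1 N, ∫ t in (x (i - 1))..(x i),
          ε * (u i).derivative.eval t * (v i).derivative.eval t := by
    rw [Finset.mul_sum]
    refine Finset.sum_congr rfl fun i _ => ?_
    rw [← intervalIntegral.integral_const_mul]
    exact intervalIntegral.integral_congr fun t _ => by ring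
  have g2 : (∑ i ∈ Finset.Icc 0 N,
        brokenAvg N x (fun j t => (u j).derivative.eval t) i
          * (c * brokenJump N x (fun j t => (v j).eval t) i))
      = c * ∑ i ∈ Finset.Icc 0 N,
          brokenAvg N x (fun j t => (u j).derivative.eval t) i
            * brokenJump N x (fun j t => (v j).eval t) i := by
    rw [Finset.mul_sum]; exact Finset.sum_congr rfl fun i _ => by ring
  have g2' : (∑ i ∈ Finset.Icc 0 N,
        c * brokenAvg N x (fun j t => (v j).derivative.eval t) i
          * brokenJump N x (fun j t => (u j).eval t) i)
      = c * ∑ i ∈ Finset.Icc 0 N,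
          brokenAvg N x (fun j t => (v j).derivative.eval t) i
            * brokenJump N x (fun j t => (u j).eval t) i := by
    rw [Finset.mul_sum]; exact Finset.sum_congr rfl fun i _ => by ring
  have g3 : (∑ i ∈ Finset.Icc 0 N,
        ρ i * brokenJump N x (fun j t => (u j).eval t) i
          * (c * brokenJump N x (fun j t => (v j).eval t) i))
      = c * ∑ i ∈ Finset.Icc 0 N,
          ρ i * brokenJump N x (fun j t => (u j).eval t) i
            * brokenJump N x (fun j t => (v j).eval t) i := by
    rw [Finset.mul_sum]; exact Finset.sum_congr rfl fun i _ => by ring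
  have g4 : (∑ i ∈ Finset.Icc 1 N, ∫ t in (x (i - 1))..(x i),
        a t * (u i).derivative.eval t * (c * (v i).eval t))
      = c * ∑ i ∈ Finset.Icc 1 N, ∫ t in (x (i - 1))..(x i),
          a t * (u i).derivative.eval t * (v i).eval t := by
    rw [Finset.mul_sum]
    refine Finset.sum_congr rfl fun i _ => ?_
    rw [← intervalIntegral.integral_const_mul]
    exact intervalIntegral.integral_congr fun t _ => by ring
  have g5 : (∑ i ∈ Finset.Icc 0 (N - 1),
        a (x i) * brokenJump N x (fun j t => (u j).eval t) i * (c * (v (i + 1)).eval (x i)))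
      = c * ∑ i ∈ Finset.Icc 0 (N - 1),
          a (x i) * brokenJump N x (fun j t => (u j).eval t) i * (v (i + 1)).eval (x i) := by
    rw [Finset.mul_sum]; exact Finset.sum_congr rfl fun i _ => by ring
  have g6 : (∑ i ∈ Finset.Icc 1 N, ∫ t in (x (i - 1))..(x i),
        b t * (u i).eval t * (c * (v i).eval t))
      = c * ∑ i ∈ Finset.Icc 1 N, ∫ t in (x (i - 1))..(x i),
          b t * (u i).eval t * (v i).eval t := by
    rw [Finset.mul_sum]
    refine Finset.sum_congr rfl fun i _ => ?_
    rw [← intervalIntegral.integral_const_mul]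
    exact intervalIntegral.integral_congr fun t _ => by ring
  rw [g1, g2, g2', g3, g4, g5, g6]
  ring


lemma jump_congr (hN : 1 ≤ N) {u1 u2 : ℕ → Polynomial ℝ}
    (hu : ∀ i ∈ Finset.Icc 1 N, u1 i = u2 i) {i : ℕ} (hi : i ∈ Finset.Icc 0 N) :
    brokenJump N x (fun j t => (u1 j).eval t) i = brokenJump N x (fun j t => (u2 j).eval t) i := by
  simp only [Finset.mem_Icc] at hi
  unfold brokenJump
  beta_reduce
  split_ifs with h h'
  · rw [hu 1 (Finset.mem_Icc.2 ⟨le_rfl, hN⟩)]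
  · rw [hu N (Finset.mem_Icc.2 ⟨hN, le_rfl⟩)]
  · rw [hu i (Finset.mem_Icc.2 ⟨by omega, by omega⟩),
      hu (i + 1) (Finset.mem_Icc.2 ⟨by omega, by omega⟩)]

lemma avg_congr (hN : 1 ≤ N) {u1 u2 : ℕ → Polynomial ℝ}
    (hu : ∀ i ∈ Finset.Icc 1 N, u1 i = u2 i) {i : ℕ} (hi : i ∈ Finset.Icc 0 N) :
    brokenAvg N x (fun j t => (u1 j).derivative.eval t) i
      = brokenAvg N x (fun j t => (u2 j).derivative.eval t) i := by
  simp only [Finset.mem_Icc] at hi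
  unfold brokenAvg
  beta_reduce
  split_ifs with h h'
  · rw [hu 1 (Finset.mem_Icc.2 ⟨le_rfl, hN⟩)]
  · rw [hu N (Finset.mem_Icc.2 ⟨hN, le_rfl⟩)]
  · rw [hu i (Finset.mem_Icc.2 ⟨by omega, by omega⟩),
      hu (i + 1) (Finset.mem_Icc.2 ⟨by omega, by omega⟩)]

lemma Bp_congr (hN : 1 ≤ N) {u1 u2 v1 v2 : ℕ → Polynomial ℝ}
    (hu : ∀ i ∈ Finset.Icc 1 N, u1 i = u2 i) (hv : ∀ i ∈ Finset.Icc 1 N, v1 i = v2 i) :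
    Bp N x ε a b ρ u1 v1 = Bp N x ε a b ρ u2 v2 := by
  unfold Bp nipgB
  have c1 : (∑ i ∈ Finset.Icc 1 N, ∫ t in (x (i - 1))..(x i),
        ε * (u1 i).derivative.eval t * (v1 i).derivative.eval t)
      = ∑ i ∈ Finset.Icc 1 N, ∫ t in (x (i - 1))..(x i),
        ε * (u2 i).derivative.eval t * (v2 i).derivative.eval t :=
    Finset.sum_congr rfl fun i hi => by rw [hu i hi, hv i hi]
  have c2 : (∑ i ∈ Finset.Icc 0 N, brokenAvg N x (fun j t => (u1 j).derivative.eval t) i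
        * brokenJump N x (fun j t => (v1 j).eval t) i)
      = ∑ i ∈ Finset.Icc 0 N, brokenAvg N x (fun j t => (u2 j).derivative.eval t) i
        * brokenJump N x (fun j t => (v2 j).eval t) i :=
    Finset.sum_congr rfl fun i hi => by rw [avg_congr hN hu hi, jump_congr hN hv hi]
  have c3 : (∑ i ∈ Finset.Icc 0 N, brokenAvg N x (fun j t => (v1 j).derivative.eval t) i
        * brokenJump N x (fun j t => (u1 j).eval t) i)
      = ∑ i ∈ Finset.Icc 0 N, brokenAvg N x (fun j t => (v2 j).derivative.eval t) i
        * brokenJump N x (fun j t => (u2 j).eval t) i :=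
    Finset.sum_congr rfl fun i hi => by rw [avg_congr hN hv hi, jump_congr hN hu hi]
  have c4 : (∑ i ∈ Finset.Icc 0 N, ρ i * brokenJump N x (fun j t => (u1 j).eval t) i
        * brokenJump N x (fun j t => (v1 j).eval t) i)
      = ∑ i ∈ Finset.Icc 0 N, ρ i * brokenJump N x (fun j t => (u2 j).eval t) i
        * brokenJump N x (fun j t => (v2 j).eval t) i :=
    Finset.sum_congr rfl fun i hi => by rw [jump_congr hN hu hi, jump_congr hN hv hi]
  have c5 : (∑ i ∈ Finset.Icc 1 N, ∫ t in (x (i - 1))..(x i),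
        a t * (u1 i).derivative.eval t * (v1 i).eval t)
      = ∑ i ∈ Finset.Icc 1 N, ∫ t in (x (i - 1))..(x i),
        a t * (u2 i).derivative.eval t * (v2 i).eval t :=
    Finset.sum_congr rfl fun i hi => by rw [hu i hi, hv i hi]
  have c6 : (∑ i ∈ Finset.Icc 0 (N - 1),
        a (x i) * brokenJump N x (fun j t => (u1 j).eval t) i * (v1 (i + 1)).eval (x i))
      = ∑ i ∈ Finset.Icc 0 (N - 1),
        a (x i) * brokenJump N x (fun j t => (u2 j).eval t) i * (v2 (i + 1)).eval (x i) := by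
    refine Finset.sum_congr rfl fun i hi => ?_
    simp only [Finset.mem_Icc] at hi
    rw [jump_congr hN hu (Finset.mem_Icc.2 ⟨Nat.zero_le _, by omega⟩),
      hv (i + 1) (Finset.mem_Icc.2 ⟨by omega, by omega⟩)]
  have c7 : (∑ i ∈ Finset.Icc 1 N, ∫ t in (x (i - 1))..(x i),
        b t * (u1 i).eval t * (v1 i).eval t)
      = ∑ i ∈ Finset.Icc 1 N, ∫ t in (x (i - 1))..(x i),
        b t * (u2 i).eval t * (v2 i).eval t :=
    Finset.sum_congr rfl fun i hi => by rw [hu i hi, hv i hi]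
  rw [c1, c2, c3, c4, c5, c6, c7]


lemma coercive {β γ : ℝ} {a' : ℝ → ℝ} (hN : 1 ≤ N)
    (hx0 : x 0 = 0) (hxN : x N = 1) (hmono : ∀ i < N, x i < x (i + 1))
    (hε : 0 < ε) (hβ : 0 < β)
    (ha : ∀ t ∈ Set.Icc (0:ℝ) 1, HasDerivWithinAt a (a' t) (Set.Icc 0 1) t)
    (ha' : ContinuousOn a' (Set.Icc 0 1))
    (haβ : ∀ t ∈ Set.Icc (0:ℝ) 1, β ≤ a t)
    (hb : ContinuousOn b (Set.Icc 0 1))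
    (hbγ : ∀ t ∈ Set.Icc (0:ℝ) 1, γ ≤ b t - a' t / 2)
    (hρ : ∀ i, 0 ≤ ρ i) (v : ℕ → Polynomial ℝ) :
    γ * ∑ i ∈ Finset.Icc 1 N, ∫ t in (x (i - 1))..(x i), ((v i).eval t) ^ 2
      ≤ Bp N x ε a b ρ v v := by
  have hacont : ContinuousOn a (Set.Icc (0:ℝ) 1) := fun t ht => (ha t ht).continuousWithinAt
  set J : ℕ → ℝ := brokenJump N x (fun j t => (v j).eval t) with hJ
  have e0 : Bp N x ε a b ρ v v
      = (∑ i ∈ Finset.Icc 1 N, ∫ t in (x (i - 1))..(x i),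
          ε * (v i).derivative.eval t * (v i).derivative.eval t)
        + (∑ i ∈ Finset.Icc 0 N, ρ i * J i * J i)
        + (∑ i ∈ Finset.Icc 1 N, ∫ t in (x (i - 1))..(x i),
            a t * (v i).derivative.eval t * (v i).eval t)
        - (∑ i ∈ Finset.Icc 0 (N - 1), a (x i) * J i * (v (i + 1)).eval (x i))
        + ∑ i ∈ Finset.Icc 1 N, ∫ t in (x (i - 1))..(x i),
            b t * (v i).eval t * (v i).eval t := by
    rw [hJ]; unfold Bp nipgB; beta_reduce; ring
  have e1 : (∑ i ∈ Finset.Icc 1 N, ∫ t in (x (i - 1))..(x i),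
        a t * (v i).derivative.eval t * (v i).eval t)
      = (∑ i ∈ Finset.Icc 1 N,
          (a (x i) * ((v i).eval (x i)) ^ 2 - a (x (i - 1)) * ((v i).eval (x (i - 1))) ^ 2) / 2)
        - ∑ i ∈ Finset.Icc 1 N, ∫ t in (x (i - 1))..(x i), a' t * ((v i).eval t) ^ 2 / 2 := by
    rw [← Finset.sum_sub_distrib]
    refine Finset.sum_congr rfl fun i hi => ?_
    obtain ⟨h1, h2⟩ := Finset.mem_Icc.1 hi
    exact ibp hx0 hxN hmono ha ha' h1 h2 (v i)
  have e3 : (∑ i ∈ Finset.Icc 1 N, ∫ t in (x (i - 1))..(x i),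
        b t * (v i).eval t * (v i).eval t)
      - (∑ i ∈ Finset.Icc 1 N, ∫ t in (x (i - 1))..(x i), a' t * ((v i).eval t) ^ 2 / 2)
      = ∑ i ∈ Finset.Icc 1 N, ∫ t in (x (i - 1))..(x i),
          (b t * ((v i).eval t) ^ 2 - a' t * ((v i).eval t) ^ 2 / 2) := by
    rw [← Finset.sum_sub_distrib]
    refine Finset.sum_congr rfl fun i hi => ?_
    obtain ⟨h1, h2⟩ := Finset.mem_Icc.1 hi
    rw [← intervalIntegral.integral_sub (f := fun t => b t * (v i).eval t * (v i).eval t)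
      (g := fun t => a' t * ((v i).eval t) ^ 2 / 2)
      (II hx0 hxN hmono h1 h2 ((hb.mul (v i).continuous.continuousOn).mul
        (v i).continuous.continuousOn))
      (II hx0 hxN hmono h1 h2 (((ha'.mul (((v i).continuous.pow 2).continuousOn)).div_const 2)))]
    exact intervalIntegral.integral_congr fun t _ => by ring
  have h4 : γ * ∑ i ∈ Finset.Icc 1 N, ∫ t in (x (i - 1))..(x i), ((v i).eval t) ^ 2
      ≤ ∑ i ∈ Finset.Icc 1 N, ∫ t in (x (i - 1))..(x i),
          (b t * ((v i).eval t) ^ 2 - a' t * ((v i).eval t) ^ 2 / 2) := by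
    rw [Finset.mul_sum]
    refine Finset.sum_le_sum fun i hi => ?_
    obtain ⟨h1, h2⟩ := Finset.mem_Icc.1 hi
    have hle := (x_lt hmono h1 h2).le
    have hsub : Set.Icc (x (i - 1)) (x i) ⊆ Set.Icc (0:ℝ) 1 := by
      have := elem_subset hx0 hxN hmono h1 h2
      rwa [Set.uIcc_of_le hle] at this
    calc γ * ∫ t in (x (i - 1))..(x i), ((v i).eval t) ^ 2
        = ∫ t in (x (i - 1))..(x i), γ * ((v i).eval t) ^ 2 :=
          (intervalIntegral.integral_const_mul _ _).symm
      _ ≤ _ := by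
          refine intervalIntegral.integral_mono_on hle
            ((continuous_const.mul ((v i).continuous.pow 2)).intervalIntegrable _ _)
            (II hx0 hxN hmono h1 h2
              (((hb.mul (((v i).continuous.pow 2).continuousOn)).sub
                ((ha'.mul (((v i).continuous.pow 2).continuousOn)).div_const 2))))
            fun t ht => ?_
          have h := hbγ t (hsub ht)
          nlinarith [sq_nonneg ((v i).eval t)]
  have h5 : 0 ≤ ∑ i ∈ Finset.Icc 1 N, ∫ t in (x (i - 1))..(x i),
      ε * (v i).derivative.eval t * (v i).derivative.eval t := by
    refine Finset.sum_nonneg fun i hi => ?_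
    obtain ⟨h1, h2⟩ := Finset.mem_Icc.1 hi
    refine intervalIntegral.integral_nonneg (x_lt hmono h1 h2).le fun t _ => ?_
    nlinarith [sq_nonneg ((v i).derivative.eval t), hε.le]
  have h6 : 0 ≤ ∑ i ∈ Finset.Icc 0 N, ρ i * J i * J i := by
    refine Finset.sum_nonneg fun i _ => ?_
    rw [mul_assoc]
    exact mul_nonneg (hρ i) (mul_self_nonneg _)
  have h7 : 0 ≤ ∑ i ∈ Finset.Icc 0 N, a (x i) * J i ^ 2 / 2 := by
    refine Finset.sum_nonneg fun i hi => ?_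
    have hx := x_mem hx0 hxN hmono (Finset.mem_Icc.1 hi).2
    have := haβ (x i) hx
    have : 0 ≤ a (x i) := by linarith
    positivity
  -- the boundary identity
  have e2 : (∑ i ∈ Finset.Icc 1 N,
        (a (x i) * ((v i).eval (x i)) ^ 2 - a (x (i - 1)) * ((v i).eval (x (i - 1))) ^ 2) / 2)
      - (∑ i ∈ Finset.Icc 0 (N - 1), a (x i) * J i * (v (i + 1)).eval (x i))
      = ∑ i ∈ Finset.Icc 0 N, a (x i) * J i ^ 2 / 2 := by
    obtain ⟨M, rfl⟩ : ∃ M, N = M + 1 := ⟨N - 1, by omega⟩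
    simp only [Nat.add_sub_cancel]
    have hre : ∀ h : ℕ → ℝ,
        ∑ i ∈ Finset.Icc 1 (M + 1), h i = ∑ i ∈ Finset.Icc 0 M, h (i + 1) := by
      intro h
      have hmap : Finset.Icc 1 (M + 1) = (Finset.Icc 0 M).map (addRightEmbedding 1) := by
        rw [Finset.map_add_right_Icc]
      rw [hmap, Finset.sum_map]
      rfl
    have split0 : ∀ (m : ℕ) (h : ℕ → ℝ),
        ∑ i ∈ Finset.Icc 0 m, h i = h 0 + ∑ i ∈ Finset.Icc 1 m, h i := by
      intro m h
      rw [show Finset.Icc 0 m = insert 0 (Finset.Icc 1 m) from by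
        ext j; simp [Finset.mem_Icc]; omega, Finset.sum_insert (by simp)]
    have splitT : ∀ h : ℕ → ℝ,
        ∑ i ∈ Finset.Icc 1 (M + 1), h i = ∑ i ∈ Finset.Icc 1 M, h i + h (M + 1) :=
      fun h => Finset.sum_Icc_succ_top (by omega) h
    have hJ0 : J 0 = -((v 1).eval (x 0)) := by rw [hJ]; unfold brokenJump; simp
    have hJT : J (M + 1) = (v (M + 1)).eval (x (M + 1)) := by
      rw [hJ]; unfold brokenJump; simp
    have hJin : ∀ i, 1 ≤ i → i ≤ M →
        J i = (v i).eval (x i) - (v (i + 1)).eval (x i) := by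
      intro i h1 h2
      rw [hJ]; unfold brokenJump; beta_reduce
      rw [if_neg (by omega), if_neg (by omega)]
    have hA2 : (∑ i ∈ Finset.Icc 1 (M + 1), a (x (i - 1)) * ((v i).eval (x (i - 1))) ^ 2)
        = a (x 0) * ((v 1).eval (x 0)) ^ 2
          + ∑ i ∈ Finset.Icc 1 M, a (x i) * ((v (i + 1)).eval (x i)) ^ 2 := by
      rw [hre fun i => a (x (i - 1)) * ((v i).eval (x (i - 1))) ^ 2]
      simp only [Nat.add_sub_cancel]
      rw [split0 M fun i => a (x i) * ((v (i + 1)).eval (x i)) ^ 2]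
    have hA1 : (∑ i ∈ Finset.Icc 1 (M + 1), a (x i) * ((v i).eval (x i)) ^ 2)
        = (∑ i ∈ Finset.Icc 1 M, a (x i) * ((v i).eval (x i)) ^ 2)
          + a (x (M + 1)) * ((v (M + 1)).eval (x (M + 1))) ^ 2 :=
      splitT fun i => a (x i) * ((v i).eval (x i)) ^ 2
    have hU : (∑ i ∈ Finset.Icc 0 M, a (x i) * J i * (v (i + 1)).eval (x i))
        = a (x 0) * J 0 * (v 1).eval (x 0)
          + ((∑ i ∈ Finset.Icc 1 M, a (x i) * ((v i).eval (x i)) * ((v (i + 1)).eval (x i)))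
            - ∑ i ∈ Finset.Icc 1 M, a (x i) * ((v (i + 1)).eval (x i)) ^ 2) := by
      rw [split0 M fun i => a (x i) * J i * (v (i + 1)).eval (x i)]
      congr 1
      rw [← Finset.sum_sub_distrib]
      refine Finset.sum_congr rfl fun i hi => ?_
      obtain ⟨h1, h2⟩ := Finset.mem_Icc.1 hi
      rw [hJin i h1 h2]; ring
    have hQ : (∑ i ∈ Finset.Icc 0 (M + 1), a (x i) * J i ^ 2 / 2)
        = a (x 0) * J 0 ^ 2 / 2
          + ((∑ i ∈ Finset.Icc 1 M, a (x i)
              * ((v i).eval (x i) - (v (i + 1)).eval (x i)) ^ 2 / 2)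
            + a (x (M + 1)) * J (M + 1) ^ 2 / 2) := by
      rw [split0 (M + 1) fun i => a (x i) * J i ^ 2 / 2, splitT fun i => a (x i) * J i ^ 2 / 2]
      congr 2
      refine Finset.sum_congr rfl fun i hi => ?_
      obtain ⟨h1, h2⟩ := Finset.mem_Icc.1 hi
      rw [hJin i h1 h2]
    have hmain : (∑ i ∈ Finset.Icc 1 (M + 1),
          (a (x i) * ((v i).eval (x i)) ^ 2 - a (x (i - 1)) * ((v i).eval (x (i - 1))) ^ 2) / 2)
        = ((∑ i ∈ Finset.Icc 1 (M + 1), a (x i) * ((v i).eval (x i)) ^ 2)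
           - ∑ i ∈ Finset.Icc 1 (M + 1), a (x (i - 1)) * ((v i).eval (x (i - 1))) ^ 2) / 2 := by
      rw [← Finset.sum_div, Finset.sum_sub_distrib]
    have hSD : (∑ i ∈ Finset.Icc 1 M, a (x i)
          * ((v i).eval (x i) - (v (i + 1)).eval (x i)) ^ 2 / 2)
        = (∑ i ∈ Finset.Icc 1 M, a (x i) * ((v i).eval (x i)) ^ 2) / 2
            - (∑ i ∈ Finset.Icc 1 M, a (x i) * ((v i).eval (x i)) * ((v (i + 1)).eval (x i)))
            + (∑ i ∈ Finset.Icc 1 M, a (x i) * ((v (i + 1)).eval (x i)) ^ 2) / 2 := by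
      rw [Finset.sum_div, Finset.sum_div, ← Finset.sum_sub_distrib, ← Finset.sum_add_distrib]
      refine Finset.sum_congr rfl fun i _ => ?_
      ring
    rw [hmain, hA1, hA2, hU, hQ, hSD, hJ0, hJT]
    ring
  linarith [e0, e1, e2, e3, h4, h5, h6, h7]


instance (n : ℕ) : FiniteDimensional ℝ (Polynomial.degreeLT ℝ n) :=
  LinearEquiv.finiteDimensional (Polynomial.degreeLTEquiv ℝ n).symm

noncomputable def extV (N k : ℕ)
    (w : { i // i ∈ Finset.Icc 1 N } → Polynomial.degreeLT ℝ (k + 1)) :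
    ℕ → Polynomial ℝ :=
  fun i => if h : i ∈ Finset.Icc 1 N then (w ⟨i, h⟩ : Polynomial ℝ) else 0

variable {k : ℕ}

lemma extV_add (w1 w2 : { i // i ∈ Finset.Icc 1 N } → Polynomial.degreeLT ℝ (k + 1)) (i : ℕ) :
    extV N k (w1 + w2) i = extV N k w1 i + extV N k w2 i := by
  unfold extV; split <;> simp

lemma extV_smul (c : ℝ) (w : { i // i ∈ Finset.Icc 1 N } → Polynomial.degreeLT ℝ (k + 1))
    (i : ℕ) : extV N k (c • w) i = c • extV N k w i := by
  unfold extV; split <;> simp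

lemma extV_deg (w : { i // i ∈ Finset.Icc 1 N } → Polynomial.degreeLT ℝ (k + 1)) (i : ℕ) :
    (extV N k w i).natDegree ≤ k := by
  unfold extV
  split
  · exact natDegree_le_of_mem (w ⟨i, ‹_›⟩).2
  · simp

lemma extV_mem (w : { i // i ∈ Finset.Icc 1 N } → Polynomial.degreeLT ℝ (k + 1)) {i : ℕ}
    (h : i ∈ Finset.Icc 1 N) : extV N k w i = (w ⟨i, h⟩ : Polynomial ℝ) := by
  unfold extV; rw [dif_pos h]

end NIPG

open NIPG MeasureTheory

/-- Well-posedness of the NIPG discrete problem: under the coercivity assumptions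
on the data there is a unique `u_N ∈ V_N^k` with `B(u_N, v) = ∫₀¹ f v` for all
`v ∈ V_N^k` (uniqueness means any two discrete solutions agree on every element). -/
theorem statement4 (N k : ℕ) (hN : 1 ≤ N) (x : ℕ → ℝ)
    (hx0 : x 0 = 0) (hxN : x N = 1) (hmono : ∀ i < N, x i < x (i + 1))
    (ε β γ : ℝ) (hε : 0 < ε) (hβ : 0 < β) (hγ : 0 < γ)
    (a a' b : ℝ → ℝ)
    (ha : ∀ t ∈ Icc (0:ℝ) 1, HasDerivWithinAt a (a' t) (Icc 0 1) t)
    (ha' : ContinuousOn a' (Icc 0 1))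
    (haβ : ∀ t ∈ Icc (0:ℝ) 1, β ≤ a t)
    (hb : ContinuousOn b (Icc 0 1))
    (hbγ : ∀ t ∈ Icc (0:ℝ) 1, γ ≤ b t - a' t / 2)
    (ρ : ℕ → ℝ) (hρ : ∀ i, 0 ≤ ρ i)
    (f : ℝ → ℝ) (hf : MeasureTheory.IntegrableOn f (Icc 0 1)) :
    ∃ uN : ℕ → Polynomial ℝ,
      (∀ i, (uN i).natDegree ≤ k) ∧
      (∀ v : ℕ → Polynomial ℝ, (∀ i, (v i).natDegree ≤ k) →
        nipgB N x ε a b ρ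
            (fun i t => (uN i).eval t) (fun i t => ((uN i).derivative).eval t)
            (fun i t => (v i).eval t) (fun i t => ((v i).derivative).eval t)
          = ∑ i ∈ Finset.Icc 1 N, ∫ t in (x (i - 1))..(x i), f t * (v i).eval t) ∧
      (∀ wN : ℕ → Polynomial ℝ, (∀ i, (wN i).natDegree ≤ k) →
        (∀ v : ℕ → Polynomial ℝ, (∀ i, (v i).natDegree ≤ k) →
          nipgB N x ε a b ρ
              (fun i t => (wN i).eval t) (fun i t => ((wN i).derivative).eval t)
              (fun i t => (v i).eval t) (fun i t => ((v i).derivative).eval t)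
            = ∑ i ∈ Finset.Icc 1 N, ∫ t in (x (i - 1))..(x i), f t * (v i).eval t) →
        ∀ i ∈ Finset.Icc 1 N, wN i = uN i) := by
  classical
  have hacont : ContinuousOn a (Icc (0:ℝ) 1) := fun t ht => (ha t ht).continuousWithinAt
  -- integrability of the source terms
  have hFi : ∀ i, 1 ≤ i → i ≤ N → ∀ p : Polynomial ℝ,
      IntervalIntegrable (fun t => f t * p.eval t) volume (x (i - 1)) (x i) := by
    intro i h1 h2 p
    apply MeasureTheory.IntegrableOn.intervalIntegrable
    exact (hf.mono (elem_subset hx0 hxN hmono h1 h2) le_rfl).mul_continuousOn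
      p.continuous.continuousOn isCompact_uIcc
  -- the discrete bilinear form as a linear map into the dual
  let B2 : ({ i // i ∈ Finset.Icc 1 N } → Polynomial.degreeLT ℝ (k + 1)) →ₗ[ℝ]
      Module.Dual ℝ ({ i // i ∈ Finset.Icc 1 N } → Polynomial.degreeLT ℝ (k + 1)) :=
    LinearMap.mk₂ ℝ (fun w v2 => Bp N x ε a b ρ (extV N k w) (extV N k v2))
      (fun w1 w2 v2 => by
        beta_reduce
        have he : extV N k (w1 + w2) = fun i => extV N k w1 i + extV N k w2 i :=
          funext fun i => extV_add w1 w2 i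
        rw [he]; exact Bp_add_left hx0 hxN hmono hacont hb _ _ _)
      (fun c w v2 => by
        beta_reduce
        have he : extV N k (c • w) = fun i => c • extV N k w i :=
          funext fun i => extV_smul c w i
        rw [he, smul_eq_mul]; exact Bp_smul_left c _ _)
      (fun w v1 v2 => by
        beta_reduce
        have he : extV N k (v1 + v2) = fun i => extV N k v1 i + extV N k v2 i :=
          funext fun i => extV_add v1 v2 i
        rw [he]; exact Bp_add_right hx0 hxN hmono hacont hb _ _ _)
      (fun c w v2 => by
        beta_reduce
        have he : extV N k (c • v2) = fun i => c • extV N k v2 i :=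
          funext fun i => extV_smul c v2 i
        rw [he, smul_eq_mul]; exact Bp_smul_right c _ _)
  -- the source functional
  let F : Module.Dual ℝ ({ i // i ∈ Finset.Icc 1 N } → Polynomial.degreeLT ℝ (k + 1)) :=
    { toFun := fun v2 => ∑ i ∈ Finset.Icc 1 N,
        ∫ t in (x (i - 1))..(x i), f t * (extV N k v2 i).eval t
      map_add' := fun v1 v2 => by
        rw [← Finset.sum_add_distrib]
        refine Finset.sum_congr rfl fun i hi => ?_
        obtain ⟨h1, h2⟩ := Finset.mem_Icc.1 hi
        simp only [extV_add, Polynomial.eval_add, mul_add]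
        exact intervalIntegral.integral_add (hFi i h1 h2 _) (hFi i h1 h2 _)
      map_smul' := fun c v2 => by
        simp only [RingHom.id_apply, smul_eq_mul]
        rw [Finset.mul_sum]
        refine Finset.sum_congr rfl fun i hi => ?_
        simp only [extV_smul, Polynomial.eval_smul, smul_eq_mul]
        rw [← intervalIntegral.integral_const_mul]
        exact intervalIntegral.integral_congr fun t _ => by ring }
  -- injectivity of B2 by coercivity
  have hinj : Function.Injective B2 := by
    rw [injective_iff_map_eq_zero]
    intro w hw
    have h0 : Bp N x ε a b ρ (extV N k w) (extV N k w) = 0 := LinearMap.congr_fun hw w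
    have hc := coercive hN hx0 hxN hmono hε hβ ha ha' haβ hb hbγ hρ (extV N k w)
    rw [h0] at hc
    have hnn : ∀ i ∈ Finset.Icc 1 N,
        0 ≤ ∫ t in (x (i - 1))..(x i), ((extV N k w i).eval t) ^ 2 := fun i hi => by
      obtain ⟨h1, h2⟩ := Finset.mem_Icc.1 hi
      exact sq_int_nonneg hmono h1 h2 _
    have hS : (∑ i ∈ Finset.Icc 1 N,
        ∫ t in (x (i - 1))..(x i), ((extV N k w i).eval t) ^ 2) = 0 := by
      have h1 := Finset.sum_nonneg hnn
      nlinarith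
    have hall := (Finset.sum_eq_zero_iff_of_nonneg hnn).1 hS
    funext j
    apply Subtype.ext
    have hz : extV N k w j.1 = 0 := by
      by_contra hne
      obtain ⟨h1, h2⟩ := Finset.mem_Icc.1 j.2
      exact absurd (hall j.1 j.2) (ne_of_gt (sq_int_pos hmono h1 h2 hne))
    rw [extV_mem w j.2] at hz
    simpa using hz
  have hsurj := (LinearMap.injective_iff_surjective_of_finrank_eq_finrank
    Subspace.dual_finrank_eq.symm).1 hinj
  obtain ⟨w, hw⟩ := hsurj F
  refine ⟨extV N k w, fun i => extV_deg w i, ?_, ?_⟩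
  · -- the solution property
    intro v hv
    have hmem : ∀ i, v i ∈ Polynomial.degreeLT ℝ (k + 1) := fun i => mem_of_natDegree_le (hv i)
    let vV : { i // i ∈ Finset.Icc 1 N } → Polynomial.degreeLT ℝ (k + 1) :=
      fun j => ⟨v j.1, hmem j.1⟩
    have hPv : ∀ i ∈ Finset.Icc 1 N, extV N k vV i = v i := fun i hi => extV_mem vV hi
    show Bp N x ε a b ρ (extV N k w) v
      = ∑ i ∈ Finset.Icc 1 N, ∫ t in (x (i - 1))..(x i), f t * (v i).eval t
    calc Bp N x ε a b ρ (extV N k w) v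
        = Bp N x ε a b ρ (extV N k w) (extV N k vV) :=
          Bp_congr hN (fun _ _ => rfl) (fun i hi => (hPv i hi).symm)
      _ = ∑ i ∈ Finset.Icc 1 N, ∫ t in (x (i - 1))..(x i), f t * (extV N k vV i).eval t :=
          LinearMap.congr_fun hw vV
      _ = ∑ i ∈ Finset.Icc 1 N, ∫ t in (x (i - 1))..(x i), f t * (v i).eval t :=
          Finset.sum_congr rfl fun i hi => by rw [hPv i hi]
  · -- uniqueness
    intro wN hdegN hsolN i hi
    have hmemN : ∀ i, wN i ∈ Polynomial.degreeLT ℝ (k + 1) :=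
      fun i => mem_of_natDegree_le (hdegN i)
    let wV : { i // i ∈ Finset.Icc 1 N } → Polynomial.degreeLT ℝ (k + 1) :=
      fun j => ⟨wN j.1, hmemN j.1⟩
    have hPw : ∀ i ∈ Finset.Icc 1 N, extV N k wV i = wN i := fun i hi => extV_mem wV hi
    have hBw : B2 wV = F := by
      apply LinearMap.ext
      intro u
      have h1 : Bp N x ε a b ρ (extV N k wV) (extV N k u)
          = Bp N x ε a b ρ wN (extV N k u) := Bp_congr hN hPw (fun _ _ => rfl)
      have h2 := hsolN (extV N k u) (fun i => extV_deg u i)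
      exact h1.trans h2
    have hwVw : wV = w := hinj (hBw.trans hw.symm)
    rw [extV_mem w hi, ← hwVw]
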